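/- Let Y be a strictly convex Banach space, let T : X → Y be a nonzero bounded linear operator between Banach spaces, and let x ∈ X with ‖x‖ ≤ 1 and ‖T(x)‖ = ‖T‖. If w ∈ X satisfies ‖x + w‖ ≤ 1 and ‖x − w‖ ≤ 1, then T(w) = 0. -/
import Mathlib

/-- Let `Y` be a strictly convex Banach space, `T : X → Y` a nonzero bounded
linear operator, and `x ∈ X` with `‖x‖ ≤ 1` and `‖T x‖ = ‖T‖`. If `w` satisfies `‖x + w‖ ≤ 1`
and `‖x - w‖ ≤ 1`, then `T w = 0`. -/
theorem stmt1 (X Y : Type*) [NormedAddCommGroup X] [NormedSpace ℝ X] [CompleteSpace X]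
    [NormedAddCommGroup Y] [NormedSpace ℝ Y] [StrictConvexSpace ℝ Y] [CompleteSpace Y]
    (T : X →L[ℝ] Y) (hT : T ≠ 0) (x : X) (hx : ‖x‖ ≤ 1) (hTx : ‖T x‖ = ‖T‖)
    (w : X) (hw₁ : ‖x + w‖ ≤ 1) (hw₂ : ‖x - w‖ ≤ 1) : T w = 0 := by
  set a := T (x + w) with ha
  set b := T (x - w) with hb
  have hTpos : 0 < ‖T‖ := norm_pos_iff.mpr hT
  have haT : ‖a‖ ≤ ‖T‖ := by
    calc ‖a‖ ≤ ‖T‖ * ‖x + w‖ := T.le_opNorm _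
    _ ≤ ‖T‖ * 1 := by gcongr
    _ = ‖T‖ := mul_one _
  have hbT : ‖b‖ ≤ ‖T‖ := by
    calc ‖b‖ ≤ ‖T‖ * ‖x - w‖ := T.le_opNorm _
    _ ≤ ‖T‖ * 1 := by gcongr
    _ = ‖T‖ := mul_one _
  have hab : a + b = T x + T x := by
    simp [ha, hb, map_add, map_sub]
  have habn : ‖a + b‖ = 2 * ‖T‖ := by
    rw [hab, ← two_smul ℝ, norm_smul, hTx]; norm_num
  have haeq : ‖a‖ = ‖T‖ := by
    have : 2 * ‖T‖ ≤ ‖a‖ + ‖b‖ := habn ▸ norm_add_le a b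
    linarith
  have hbeq : ‖b‖ = ‖T‖ := by
    have : 2 * ‖T‖ ≤ ‖a‖ + ‖b‖ := habn ▸ norm_add_le a b
    linarith
  have hsame : SameRay ℝ a b := sameRay_iff_norm_add.mpr (by rw [habn, haeq, hbeq]; ring)
  have : a = b := hsame.eq_of_norm_eq (haeq.trans hbeq.symm)
  have h2 : T w + T w = 0 := by
    have h3 : a - b = T w + T w := by
      simp [ha, hb, map_add, map_sub]
    rw [← h3, ‹a = b›, sub_self]
  have := congrArg (fun y => (2:ℝ)⁻¹ • y) h2
  simpa [smul_add, ← two_smul ℝ (T w), smul_smul] using this
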